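/- Let H be an n×n real symmetric matrix whose eigenvalues, counted with multiplicity and listed in decreasing order λ₁ ≥ λ₂ ≥ ⋯ ≥ λₙ, satisfy λ₁ > 0 and λ_{n-p+1}, …, λₙ < 0 ≤ λ_{n-p} for some p with 1 ≤ p < n (i.e. H has exactly p negative eigenvalues). Suppose 0 < α < 4/λ₁ and β ∈ (max(-1 + αλ₁/2, 0), 1). Then exactly p of the 2n complex roots (counted with multiplicity) of the characteristic polynomial of the 2n×2n block matrix A = [[(1+β)Iₙ - αH, -βIₙ], [Iₙ, 0]] have modulus greater than 1; each such root is real and lies in (1, ∞), and the remaining 2n - p roots have modulus at most 1. -/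

import Mathlib

open Polynomial Matrix

private lemma eval_charpoly' {m : Type*} [Fintype m] [DecidableEq m]
    (M : Matrix m m ℝ) (r : ℝ) :
    M.charpoly.eval r = (r • (1 : Matrix m m ℝ) - M).det := by
  rw [Matrix.charpoly, ← Polynomial.coe_evalRingHom, RingHom.map_det]
  congr 1
  ext i j
  by_cases h : i = j
  · subst h; simp [charmatrix_apply_eq]
  · simp [charmatrix_apply_ne _ _ _ h, Matrix.one_apply, h]

private lemma real_bound (b c s t : ℝ) (hc1 : c < 1)
    (hble : b ≤ 1 + c) (hbgt : -(1 + c) < b) (hst : s * t = c) (hsum : s + t = b) :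
    -1 ≤ s ∧ s ≤ 1 := by
  constructor
  · by_contra hgt
    push_neg at hgt
    have h2 : (s + 1) * (t + 1) = c + b + 1 := by linear_combination hst + hsum
    have h3 : t + 1 < 0 := by nlinarith
    linarith
  · by_contra hgt
    push_neg at hgt
    have h2 : (s - 1) * (t - 1) = c - b + 1 := by linear_combination hst - hsum
    have h3 : 0 ≤ t - 1 := by nlinarith
    linarith

private lemma quad_facts (b c : ℝ) (hc0 : 0 < c) (hc1 : c < 1) (z w : ℂ)
    (hs : z + w = (b : ℂ)) (hp : z * w = (c : ℂ)) :
    (b ≤ 1 + c → -(1 + c) < b → ‖z‖ ≤ 1 ∧ ‖w‖ ≤ 1) ∧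
    (1 + c < b →
      ((1 < z.re ∧ z.im = 0 ∧ ‖z‖ = z.re ∧ ‖w‖ ≤ 1) ∨
       (1 < w.re ∧ w.im = 0 ∧ ‖w‖ = w.re ∧ ‖z‖ ≤ 1))) := by
  have e1 : z.re + w.re = b := by
    have := congrArg Complex.re hs; simpa using this
  have e2 : w.im = -z.im := by
    have := congrArg Complex.im hs; simp at this; linarith
  have hpre : z.re * w.re - z.im * w.im = c := by
    have := congrArg Complex.re hp; simpa [Complex.mul_re] using this
  have hpim : z.re * w.im + z.im * w.re = 0 := by
    have := congrArg Complex.im hp; simpa [Complex.mul_im] using this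
  have e3 : z.re * w.re + z.im * z.im = c := by linear_combination hpre + z.im * e2
  have e4 : z.im * (w.re - z.re) = 0 := by linear_combination hpim - z.re * e2
  have habsz : z.im = 0 → ‖z‖ = |z.re| := fun h => by
    rw [show z = (z.re : ℂ) from Complex.ext rfl (by simp [h])]
    simp [Complex.norm_real]
  have habsw : z.im = 0 → ‖w‖ = |w.re| := fun h => by
    rw [show w = (w.re : ℂ) from Complex.ext rfl (by simp [e2, h])]
    simp [Complex.norm_real]
  constructor
  · intro hble hbgt
    rcases mul_eq_zero.1 e4 with hy0 | hux
    · have hxu : z.re * w.re = c := by nlinarith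
      have b1 := real_bound b c z.re w.re hc1 hble hbgt hxu e1
      have b2 := real_bound b c w.re z.re hc1 hble hbgt
        (by rw [mul_comm]; exact hxu) (by linarith)
      rw [habsz hy0, habsw hy0]
      constructor <;> rw [abs_le] <;> constructor <;>
        linarith [b1.1, b1.2, b2.1, b2.2]
    · have hux' : w.re = z.re := by linarith
      have hnz : Complex.normSq z = c := by
        rw [Complex.normSq_apply]; nlinarith
      have hnw : Complex.normSq w = c := by
        rw [Complex.normSq_apply, hux', e2]; nlinarith
      constructor <;> rw [Complex.norm_def] <;>
        [rw [hnz]; rw [hnw]] <;> exact Real.sqrt_le_one.mpr (le_of_lt hc1)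
  · intro hbgt
    rcases mul_eq_zero.1 e4 with hy0 | hux
    · have hxu : z.re * w.re = c := by nlinarith
      have hfac : (z.re - 1) * (w.re - 1) < 0 := by nlinarith
      have hv0 : w.im = 0 := by rw [e2, hy0, neg_zero]
      rcases mul_neg_iff.1 hfac with ⟨h1, h2⟩ | ⟨h1, h2⟩
      · left
        have hxpos : 1 < z.re := by linarith
        have hupos : 0 < w.re := by nlinarith
        refine ⟨hxpos, hy0, ?_, ?_⟩
        · rw [habsz hy0]; exact abs_of_pos (by linarith)
        · rw [habsw hy0, abs_le]; constructor <;> linarith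
      · right
        have hupos : 1 < w.re := by linarith
        have hxpos : 0 < z.re := by nlinarith
        refine ⟨hupos, hv0, ?_, ?_⟩
        · rw [habsw hy0]; exact abs_of_pos (by linarith)
        · rw [habsz hy0, abs_le]; constructor <;> linarith
    · exfalso
      have hux' : w.re = z.re := by linarith
      nlinarith [sq_nonneg (z.re - 1), sq_nonneg z.im]

private lemma multiset_filter_bind {α β : Type*} [DecidableEq β] (s : Multiset α)
    (f : α → Multiset β) (P : β → Prop) [DecidablePred P] :
    (s.bind f).filter P = s.bind fun a => (f a).filter P := by
  induction s using Multiset.induction_on with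
  | empty => simp
  | cons a s ih => simp [Multiset.cons_bind, Multiset.filter_add, ih]

/-- Let `H` be an `n×n` real symmetric matrix whose eigenvalues, counted
with multiplicity and listed in decreasing order `λ₁ ≥ ⋯ ≥ λₙ`, satisfy `λ₁ > 0` and
`λ_{n-p+1}, …, λₙ < 0 ≤ λ_{n-p}` for some `1 ≤ p < n`. Suppose `0 < α < 4/λ₁` and
`β ∈ (max(-1 + αλ₁/2, 0), 1)`. Then exactly `p` of the `2n` complex roots (with
multiplicity) of the characteristic polynomial of
`A = [[(1+β)Iₙ - αH, -βIₙ], [Iₙ, 0]]` have modulus greater than `1`; each such root is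
real and lies in `(1, ∞)`, and the remaining `2n - p` roots have modulus at most `1`. -/
theorem stmt_5 (n p : ℕ) (hn : 0 < n) (hp : 1 ≤ p) (hpn : p < n)
    (H : Matrix (Fin n) (Fin n) ℝ) (hH : H.IsSymm)
    (lam : Fin n → ℝ) (hdec : ∀ i j : Fin n, i ≤ j → lam j ≤ lam i)
    (heig : H.charpoly = ∏ i : Fin n, (X - C (lam i)))
    (hpos : 0 < lam ⟨0, hn⟩)
    (hsign : ∀ i : Fin n, ((i : ℕ) < n - p → 0 ≤ lam i) ∧ (n - p ≤ (i : ℕ) → lam i < 0))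
    (α β : ℝ) (hα : 0 < α) (hα' : α < 4 / lam ⟨0, hn⟩)
    (hβ : β ∈ Set.Ioo (max (-1 + α * lam ⟨0, hn⟩ / 2) 0) 1)
    (A : Matrix (Fin n ⊕ Fin n) (Fin n ⊕ Fin n) ℝ)
    (hA : A = Matrix.fromBlocks ((1 + β) • (1 : Matrix (Fin n) (Fin n) ℝ) - α • H)
      (-(β • (1 : Matrix (Fin n) (Fin n) ℝ))) (1 : Matrix (Fin n) (Fin n) ℝ) 0) :
    Multiset.card
        (((A.map (algebraMap ℝ ℂ)).charpoly.roots).filter (fun μ => 1 < ‖μ‖)) = p ∧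
    (∀ μ ∈ (A.map (algebraMap ℝ ℂ)).charpoly.roots,
        1 < ‖μ‖ → μ.im = 0 ∧ 1 < μ.re) ∧
    Multiset.card ((A.map (algebraMap ℝ ℂ)).charpoly.roots) = 2 * n := by
  obtain ⟨hβlo, hβ1⟩ := hβ
  have hβ0 : 0 < β := lt_of_le_of_lt (le_max_right _ _) hβlo
  have halam1 : α * lam ⟨0, hn⟩ < 2 * (1 + β) := by
    have : -1 + α * lam ⟨0, hn⟩ / 2 < β := lt_of_le_of_lt (le_max_left _ _) hβlo
    linarith
  have hlam_le : ∀ i : Fin n, lam i ≤ lam ⟨0, hn⟩ := fun i =>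
    hdec ⟨0, hn⟩ i (by simp [Fin.le_def])
  -- Step 1: the characteristic polynomial of A
  have hchar : A.charpoly = ∏ i : Fin n, (X ^ 2 - C (1 + β - α * lam i) * X + C β) := by
    apply Polynomial.eq_of_infinite_eval_eq
    apply Set.Infinite.mono (s := ({0}ᶜ : Set ℝ))
    swap
    · exact (Set.finite_singleton 0).infinite_compl
    intro r hr
    have hr0 : r ≠ 0 := hr
    simp only [Set.mem_setOf_eq]
    have hblock : r • (1 : Matrix (Fin n ⊕ Fin n) (Fin n ⊕ Fin n) ℝ) - A =
        fromBlocks (r • (1 : Matrix (Fin n) (Fin n) ℝ) - ((1 + β) • 1 - α • H))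
          (β • (1 : Matrix (Fin n) (Fin n) ℝ)) (-1) (r • (1 : Matrix (Fin n) (Fin n) ℝ)) := by
      rw [hA]
      ext (i|i) (j|j) <;>
        simp [Matrix.one_apply, Matrix.sub_apply, Matrix.smul_apply, Sum.inl.injEq, Sum.inr.injEq]
    haveI : Invertible (r • (1 : Matrix (Fin n) (Fin n) ℝ)) :=
      ⟨r⁻¹ • (1 : Matrix (Fin n) (Fin n) ℝ),
        by rw [Matrix.smul_mul, Matrix.one_mul, smul_smul, inv_mul_cancel₀ hr0, one_smul],
        by rw [Matrix.smul_mul, Matrix.one_mul, smul_smul, mul_inv_cancel₀ hr0, one_smul]⟩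
    have hinv : ⅟(r • (1 : Matrix (Fin n) (Fin n) ℝ)) = r⁻¹ • (1 : Matrix (Fin n) (Fin n) ℝ) :=
      invOf_eq_right_inv
        (by rw [Matrix.smul_mul, Matrix.one_mul, smul_smul, mul_inv_cancel₀ hr0, one_smul])
    rw [eval_charpoly', hblock, Matrix.det_fromBlocks₂₂, hinv]
    have hc : (r • (1 : Matrix (Fin n) (Fin n) ℝ) - ((1 + β) • 1 - α • H)) -
        (β • (1 : Matrix (Fin n) (Fin n) ℝ)) * (r⁻¹ • (1 : Matrix (Fin n) (Fin n) ℝ)) * (-1) =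
        α • -((-(α⁻¹ * (r - (1 + β) + β * r⁻¹))) • (1 : Matrix (Fin n) (Fin n) ℝ) - H) := by
      rw [Matrix.smul_mul, Matrix.mul_smul, Matrix.one_mul, Matrix.mul_neg, Matrix.mul_one]
      match_scalars <;> (field_simp; try ring)
    rw [hc, Matrix.det_smul, Matrix.det_smul, Matrix.det_neg, ← eval_charpoly', heig,
      Matrix.det_one, eval_prod, eval_prod]
    simp only [eval_sub, eval_add, eval_pow, eval_mul, eval_X, eval_C]
    have key : ∏ i : Fin n, (r ^ 2 - (1 + β - α * lam i) * r + β)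
        = ∏ i : Fin n, ((-(r * α)) * (-(α⁻¹ * (r - (1 + β) + β * r⁻¹)) - lam i)) :=
      Finset.prod_congr rfl (fun i _ => by field_simp; ring)
    rw [key, Finset.prod_mul_distrib, Finset.prod_const, Finset.card_univ]
    simp only [Fintype.card_fin]
    ring
  -- Step 2: over ℂ
  have hcharC : (A.map (algebraMap ℝ ℂ)).charpoly =
      ∏ i : Fin n, (X ^ 2 - C ((1 + β - α * lam i : ℝ) : ℂ) * X + C ((β : ℝ) : ℂ)) := by
    rw [Matrix.charpoly_map, hchar, Polynomial.map_prod]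
    refine Finset.prod_congr rfl fun i _ => ?_
    simp [Polynomial.map_sub, Polynomial.map_add, Polynomial.map_mul, Polynomial.map_pow]
  -- Step 3: roots of each quadratic
  have key : ∀ i : Fin n, ∃ z w : ℂ,
      (X ^ 2 - C ((1 + β - α * lam i : ℝ) : ℂ) * X + C ((β : ℝ) : ℂ)).roots = {z, w} ∧
      z + w = ((1 + β - α * lam i : ℝ) : ℂ) ∧ z * w = ((β : ℝ) : ℂ) := by
    intro i
    set bC : ℂ := ((1 + β - α * lam i : ℝ) : ℂ) with hbC
    set cC : ℂ := ((β : ℝ) : ℂ) with hcC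
    set q : ℂ[X] := X ^ 2 - C bC * X + C cC with hq
    have hq' : q = C 1 * X ^ 2 + C (-bC) * X + C cC := by
      rw [hq]; simp only [Polynomial.C_1, one_mul, Polynomial.C_neg]; ring
    have hdeg : q.degree = 2 := by rw [hq']; exact Polynomial.degree_quadratic one_ne_zero
    obtain ⟨z, hz⟩ := Complex.exists_root (f := q) (by rw [hdeg]; norm_num)
    have hzeval : z ^ 2 - bC * z + cC = 0 := by
      have := hz
      simp only [Polynomial.IsRoot, hq, eval_add, eval_sub, eval_pow, eval_mul, eval_X,
        eval_C] at this
      exact this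
    refine ⟨z, bC - z, ?_, by ring, by linear_combination -hzeval⟩
    have hfac : q = (X - C z) * (X - C (bC - z)) := by
      have h1 : (X - C z) * (X - C (bC - z)) =
          X ^ 2 - C (z + (bC - z)) * X + C (z * (bC - z)) := by
        simp only [Polynomial.C_add, Polynomial.C_sub, Polynomial.C_mul, Polynomial.C_pow]; ring
      rw [h1, show z + (bC - z) = bC by ring, show z * (bC - z) = cC by
        linear_combination -hzeval]
    rw [hfac, Polynomial.roots_mul (mul_ne_zero (X_sub_C_ne_zero z) (X_sub_C_ne_zero (bC - z))),
      Polynomial.roots_X_sub_C, Polynomial.roots_X_sub_C]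
    rfl
  choose z w hroots hsum hprod using key
  -- nonvanishing of the quadratics
  have hqne : ∀ i : Fin n,
      (X ^ 2 - C ((1 + β - α * lam i : ℝ) : ℂ) * X + C ((β : ℝ) : ℂ)) ≠ 0 := by
    intro i h
    have hdeg : (X ^ 2 - C ((1 + β - α * lam i : ℝ) : ℂ) * X + C ((β : ℝ) : ℂ)).degree = 2 := by
      rw [show X ^ 2 - C ((1 + β - α * lam i : ℝ) : ℂ) * X + C ((β : ℝ) : ℂ) =
        C 1 * X ^ 2 + C (-((1 + β - α * lam i : ℝ) : ℂ)) * X + C ((β : ℝ) : ℂ) by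
        simp only [Polynomial.C_1, one_mul, Polynomial.C_neg]; ring]
      exact Polynomial.degree_quadratic one_ne_zero
    rw [h] at hdeg
    simp at hdeg
  -- the roots multiset
  have hrootsC : (A.map (algebraMap ℝ ℂ)).charpoly.roots =
      (Finset.univ.val : Multiset (Fin n)).bind fun i => {z i, w i} := by
    rw [hcharC, Polynomial.roots_prod _ _ (Finset.prod_ne_zero_iff.mpr fun i _ => hqne i)]
    exact Multiset.bind_congr fun i _ => hroots i
  -- facts per index
  have facts := fun i : Fin n => quad_facts (1 + β - α * lam i) β hβ0 hβ1 (z i) (w i)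
    (by rw [hsum i]) (by rw [hprod i])
  have case_neg : ∀ i : Fin n, n - p ≤ (i : ℕ) →
      (1 < (z i).re ∧ (z i).im = 0 ∧ ‖z i‖ = (z i).re ∧ ‖w i‖ ≤ 1) ∨
      (1 < (w i).re ∧ (w i).im = 0 ∧ ‖w i‖ = (w i).re ∧ ‖z i‖ ≤ 1) := by
    intro i hi
    exact (facts i).2 (by have := (hsign i).2 hi; nlinarith)
  have case_pos : ∀ i : Fin n, (i : ℕ) < n - p →
      ‖z i‖ ≤ 1 ∧ ‖w i‖ ≤ 1 := by
    intro i hi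
    have h0 : 0 ≤ lam i := (hsign i).1 hi
    have h1 : α * lam i ≤ α * lam ⟨0, hn⟩ :=
      mul_le_mul_of_nonneg_left (hlam_le i) (le_of_lt hα)
    exact (facts i).1 (by nlinarith) (by nlinarith)
  -- per-index filter card
  have hcard_i : ∀ i : Fin n,
      Multiset.card (Multiset.filter (fun μ => 1 < ‖μ‖) ({z i, w i} : Multiset ℂ)) =
      if n - p ≤ (i : ℕ) then 1 else 0 := by
    intro i
    by_cases hi : n - p ≤ (i : ℕ)
    · rw [if_pos hi]
      rcases case_neg i hi with ⟨h1, _, habs, hwle⟩ | ⟨h1, _, habs, hzle⟩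
      · have h1' : 1 < ‖z i‖ := by rw [habs]; exact h1
        have h2' : ¬ 1 < ‖w i‖ := not_lt.2 hwle
        simp [Multiset.insert_eq_cons, Multiset.filter_cons, Multiset.filter_singleton, h1', h2']
      · have h1' : 1 < ‖w i‖ := by rw [habs]; exact h1
        have h2' : ¬ 1 < ‖z i‖ := not_lt.2 hzle
        simp [Multiset.insert_eq_cons, Multiset.filter_cons, Multiset.filter_singleton, h1', h2']
    · rw [if_neg hi]
      push_neg at hi
      obtain ⟨hz1, hw1⟩ := case_pos i hi
      have h1' : ¬ 1 < ‖z i‖ := not_lt.2 hz1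
      have h2' : ¬ 1 < ‖w i‖ := not_lt.2 hw1
      simp [Multiset.insert_eq_cons, Multiset.filter_cons, Multiset.filter_singleton, h1', h2']
  refine ⟨?_, ?_, ?_⟩
  · -- count = p
    rw [hrootsC, multiset_filter_bind, Multiset.card_bind]
    have : ∀ i : Fin n, (Multiset.card ∘ fun i =>
        Multiset.filter (fun μ => 1 < ‖μ‖) ({z i, w i} : Multiset ℂ)) i =
        if n - p ≤ (i : ℕ) then 1 else 0 := fun i => hcard_i i
    rw [show ((Finset.univ.val : Multiset (Fin n)).map (Multiset.card ∘ fun i =>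
        Multiset.filter (fun μ => 1 < ‖μ‖) ({z i, w i} : Multiset ℂ))).sum =
        ∑ i : Fin n, if n - p ≤ (i : ℕ) then 1 else 0 from by
      rw [Finset.sum]
      exact congrArg Multiset.sum (Multiset.map_congr rfl fun i _ => this i)]
    have hsum2 : (∑ i : Fin n, if n - p ≤ (i : ℕ) then 1 else 0) =
        (Finset.univ.filter (fun i : Fin n => n - p ≤ (i : ℕ))).card := by
      rw [Finset.card_eq_sum_ones, Finset.sum_filter]
    have hfe : Finset.univ.filter (fun i : Fin n => n - p ≤ (i : ℕ)) =
        Finset.Ici (⟨n - p, by omega⟩ : Fin n) := by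
      ext i
      simp [Finset.mem_Ici, Fin.le_def]
    rw [hsum2, hfe, Fin.card_Ici]
    simp only [Fin.val_mk]
    omega
  · -- real and > 1
    intro μ hμ hμ1
    rw [hrootsC] at hμ
    obtain ⟨i, _, hmem⟩ := Multiset.mem_bind.1 hμ
    rcases Multiset.mem_cons.1 hmem with hmz | hmw
    · subst hmz
      by_cases hi : n - p ≤ (i : ℕ)
      · rcases case_neg i hi with ⟨h1, him, habs, _⟩ | ⟨_, _, _, hzle⟩
        · exact ⟨him, by rwa [habs] at hμ1⟩
        · exact absurd hμ1 (not_lt.2 hzle)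
      · push_neg at hi
        exact absurd hμ1 (not_lt.2 (case_pos i hi).1)
    · rw [Multiset.mem_singleton] at hmw
      subst hmw
      by_cases hi : n - p ≤ (i : ℕ)
      · rcases case_neg i hi with ⟨_, _, _, hwle⟩ | ⟨h1, him, habs, _⟩
        · exact absurd hμ1 (not_lt.2 hwle)
        · exact ⟨him, by rwa [habs] at hμ1⟩
      · push_neg at hi
        exact absurd hμ1 (not_lt.2 (case_pos i hi).2)
  · -- total card = 2n
    rw [hrootsC, Multiset.card_bind]
    rw [show ((Finset.univ.val : Multiset (Fin n)).map (Multiset.card ∘ fun i =>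
        ({z i, w i} : Multiset ℂ))).sum = ∑ _i : Fin n, 2 from by
      rw [Finset.sum]
      exact congrArg Multiset.sum (Multiset.map_congr rfl fun i _ => rfl)]
    simp [Finset.sum_const, Finset.card_univ, mul_comm]
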